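/- Let H be a 2-regular class 2 graph whose shortest odd cycle has length m. Then cms(H) ≤ (m−1)·|E(H)|/(2m). -/

import Mathlib

open SimpleGraph

/-- Two edges are adjacent if they are distinct and share a vertex. -/
def EdgesAdj {V : Type*} (e e' : Sym2 V) : Prop :=
  e ≠ e' ∧ ∃ v : V, v ∈ e ∧ v ∈ e'

/-- `ms` of an ordering of a graph, the ordering being given as the list of edges
in increasing label order: the largest `s ∈ {1,…,m}` such that any ordered pair of
adjacent edges `(e,e')` with `ℓ(e) < ℓ(e')` has forward distance at least `s`. -/
noncomputable def msList {V : Type*} (L : List (Sym2 V)) : ℕ :=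
  sSup {s | 1 ≤ s ∧ s ≤ L.length ∧ ∀ i j e e', i < j →
    L[i]? = some e → L[j]? = some e' → EdgesAdj e e' → s ≤ j - i}

/-- `cms` of an ordering of a graph: the largest `s ∈ {1,…,m}` such that every pair of
adjacent edges is at cyclic distance at least `s`. -/
noncomputable def cmsList {V : Type*} (L : List (Sym2 V)) : ℕ :=
  sSup {s | 1 ≤ s ∧ s ≤ L.length ∧ ∀ i j e e', i < j →
    L[i]? = some e → L[j]? = some e' → EdgesAdj e e' →
    s ≤ min (j - i) (L.length - (j - i))}

/-- `L` is an ordering of `G`: it lists every edge of `G` exactly once. -/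
def IsOrdering {V : Type*} (G : SimpleGraph V) (L : List (Sym2 V)) : Prop :=
  L.Nodup ∧ ∀ e, e ∈ L ↔ e ∈ G.edgeSet

/-- Cyclic matching sequenceability of a graph: the maximum of `cmsList` over orderings. -/
noncomputable def cms {V : Type*} (G : SimpleGraph V) : ℕ :=
  sSup {k | ∃ L, IsOrdering G L ∧ cmsList L = k}

/-- Number of edges of a graph. -/
noncomputable def numEdges {V : Type*} (G : SimpleGraph V) : ℕ :=
  Nat.card G.edgeSet

/-- The chromatic index: the least number of colours in a proper edge colouring. -/
noncomputable def chromaticIndex {V : Type*} (G : SimpleGraph V) : ℕ :=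
  sInf {c | ∃ f : G.edgeSet → Fin c, ∀ e e' : G.edgeSet, EdgesAdj e.1 e'.1 → f e ≠ f e'}

/-- The edge set of `G` forms a matching (no two distinct edges share a vertex). -/
def IsMatchingGraph {V : Type*} (G : SimpleGraph V) : Prop :=
  ∀ e ∈ G.edgeSet, ∀ e' ∈ G.edgeSet, ¬ EdgesAdj e e'

/-- `G` is regular of degree `d`. -/
def IsRegularGraph {V : Type*} (G : SimpleGraph V) (d : ℕ) : Prop :=
  ∀ v : V, Nat.card (G.neighborSet v) = d

/-- A finite set of edges of `G` forming a matching. -/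
def IsMatchingSet {V : Type*} (G : SimpleGraph V) (M : Finset (Sym2 V)) : Prop :=
  ↑M ⊆ G.edgeSet ∧ ∀ e ∈ M, ∀ e' ∈ M, ¬ EdgesAdj e e'

/-- The matching number of a graph. -/
noncomputable def matchingNumber {V : Type*} (G : SimpleGraph V) : ℕ :=
  sSup {k | ∃ M : Finset (Sym2 V), IsMatchingSet G M ∧ M.card = k}

section Aux
open Finset
lemma fin_sub_val {n : ℕ} [NeZero n] (x y : Fin n) :
    (x - y).val = if y.val ≤ x.val then x.val - y.val else n + x.val - y.val := by
  rw [Fin.sub_def]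
  simp only []
  split
  · have h : n - y.val + x.val = (x.val - y.val) + n := by omega
    rw [h, Nat.add_mod_right, Nat.mod_eq_of_lt (by omega)]
  · rw [Nat.mod_eq_of_lt (by omega)]
    omega

lemma card_val_lt {n s : ℕ} [NeZero n] (hs : s ≤ n) :
    (Finset.univ.filter (fun k : Fin n => k.val < s)).card = s := by
  have h : Finset.image Fin.val (Finset.univ.filter (fun k : Fin n => k.val < s)) = Finset.range s := by
    ext a
    simp only [Finset.mem_image, Finset.mem_filter, Finset.mem_range, Finset.mem_univ, true_and]
    constructor
    · rintro ⟨k, hk, rfl⟩; exact hk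
    · intro ha; exact ⟨⟨a, by omega⟩, ha, rfl⟩
  rw [← Finset.card_image_of_injective _ Fin.val_injective, h, Finset.card_range]

lemma matching_le {V : Type*} [Fintype V] [DecidableEq V] (T : Finset V) (M : Finset (Sym2 V))
    (hsub : ∀ e ∈ M, ∀ v ∈ e, v ∈ T)
    (hdiag : ∀ e ∈ M, ¬ e.IsDiag)
    (hM : ∀ e ∈ M, ∀ e' ∈ M, ¬ EdgesAdj e e') :
    2 * M.card ≤ T.card := by
  classical
  set f : Sym2 V → Finset V := fun e => Finset.univ.filter (· ∈ e) with hf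
  have hdisj : ∀ e ∈ M, ∀ e' ∈ M, e ≠ e' → Disjoint (f e) (f e') := by
    intro e he e' he' hne
    rw [Finset.disjoint_left]
    intro v hv hv'
    simp only [hf, mem_filter] at hv hv'
    exact hM e he e' he' ⟨hne, v, hv.2, hv'.2⟩
  have hcard : ∀ e ∈ M, (f e).card = 2 := by
    intro e he
    induction e using Sym2.inductionOn with
    | hf x y =>
      have hxy : x ≠ y := by
        intro h; exact hdiag _ he (by simp [h, Sym2.isDiag_iff_proj_eq])
      have h2 : f s(x, y) = {x, y} := by
        ext z; simp [hf, Sym2.mem_iff]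
      rw [h2, Finset.card_insert_of_notMem (by simp [hxy]), Finset.card_singleton]
  calc 2 * M.card = ∑ e ∈ M, (f e).card := by
        rw [Finset.sum_congr rfl hcard, Finset.sum_const, smul_eq_mul, mul_comm]
    _ = (M.biUnion f).card := (Finset.card_biUnion hdisj).symm
    _ ≤ T.card := by
        apply Finset.card_le_card
        intro v hv
        simp only [Finset.mem_biUnion, hf, mem_filter] at hv
        obtain ⟨e, he, _, hve⟩ := hv
        exact hsub e he v hve

lemma key_count {V : Type*} [Fintype V] {H : SimpleGraph V} {L : List (Sym2 V)}
    (hL : IsOrdering H L) {m s : ℕ} {v : V} (w : H.Walk v v) (hcyc : w.IsCycle)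
    (hlenm : w.length = m) (hodd : Odd m) (hs1 : 1 ≤ s) (hsn : s ≤ L.length)
    (hprop : ∀ i j e e', i < j → L[i]? = some e → L[j]? = some e' → EdgesAdj e e' →
      s ≤ min (j - i) (L.length - (j - i))) :
    2 * (s * m) ≤ (m - 1) * L.length := by
  classical
  have hm3 : 3 ≤ m := hlenm ▸ hcyc.three_le_length
  have hn1 : 1 ≤ L.length := le_trans hs1 hsn
  set n := L.length with hn
  haveI : NeZero n := ⟨by omega⟩
  set C : Finset (Sym2 V) := w.edges.toFinset with hC
  have hCcard : C.card = m := by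
    rw [hC, List.toFinset_card_of_nodup hcyc.edges_nodup, Walk.length_edges, hlenm]
  set T : Finset V := w.support.tail.toFinset with hT
  have htlen : w.support.tail.length = m := by
    have h := w.length_support
    rw [List.length_tail, h, hlenm]
    omega
  have hTcard : T.card = m := by
    rw [hT, List.toFinset_card_of_nodup hcyc.support_nodup, htlen]
  -- all endpoints of cycle edges are in T
  have hmemT : ∀ e ∈ C, ∀ x ∈ e, x ∈ T := by
    intro e he x hx
    rw [hC, List.mem_toFinset] at he
    have hxsupp : x ∈ w.support := by
      induction e using Sym2.inductionOn with
      | hf a b =>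
        rcases Sym2.mem_iff.mp hx with rfl | rfl
        · exact w.fst_mem_support_of_mem_edges he
        · exact w.snd_mem_support_of_mem_edges he
    have hne : w.support.tail ≠ [] := by
      intro h; rw [h] at htlen; simp at htlen; omega
    have hvt : v ∈ w.support.tail := by
      have hd : w.darts ≠ [] := by
        intro h; apply hne; rw [← w.map_snd_darts, h]; rfl
      have hmem : (w.darts.getLast hd).snd ∈ w.darts.map (·.snd) :=
        List.mem_map_of_mem (List.getLast_mem hd)
      rwa [w.getLast_darts_eq_lastDart hd, w.map_snd_darts] at hmem
    rcases (w.mem_support_iff).mp hxsupp with rfl | h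
    · exact hT ▸ List.mem_toFinset.mpr hvt
    · exact hT ▸ List.mem_toFinset.mpr h
  -- positions of cycle edges
  set P : Finset (Fin n) := Finset.univ.filter (fun i : Fin n => L.get i ∈ C) with hP
  have hgetinj : Function.Injective (fun i : Fin n => L.get i) :=
    List.nodup_iff_injective_get.mp hL.1
  have hPcard : P.card = m := by
    rw [← hCcard]
    apply Finset.card_bij (fun i _ => L.get i)
    · intro i hi; rw [hP, mem_filter] at hi; exact hi.2
    · intro i _ j _ hij; exact hgetinj hij
    · intro e he
      have he' : e ∈ L := (hL.2 e).mpr (w.edges_subset_edgeSet (List.mem_toFinset.mp (hC ▸ he)))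
      obtain ⟨i, hi⟩ := List.mem_iff_get.mp he'
      exact ⟨i, by rw [hP, mem_filter]; exact ⟨mem_univ _, hi ▸ he⟩, hi⟩
  -- per-window matching bound
  have hwin : ∀ t : Fin n, 2 * (P.filter (fun i => (i - t).val < s)).card ≤ m - 1 := by
    intro t
    set W := P.filter (fun i => (i - t).val < s) with hW
    set M : Finset (Sym2 V) := W.image (fun i : Fin n => L.get i) with hM
    have hMcard : M.card = W.card := Finset.card_image_of_injective _ hgetinj
    have hMC : ∀ e ∈ M, e ∈ C := by
      intro e he
      rw [hM, Finset.mem_image] at he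
      obtain ⟨i, hi, rfl⟩ := he
      rw [hW, mem_filter, hP, mem_filter] at hi
      exact hi.1.2
    have key2 : ∀ i j : Fin n, i ∈ W → j ∈ W → i.val < j.val →
        ¬ EdgesAdj (L.get i) (L.get j) := by
      intro i j hi hj hlt hadj
      rw [hW, mem_filter] at hi hj
      have h1 : L[i.val]? = some (L.get i) := by
        rw [List.get_eq_getElem]; exact List.getElem?_eq_getElem i.isLt
      have h2 : L[j.val]? = some (L.get j) := by
        rw [List.get_eq_getElem]; exact List.getElem?_eq_getElem j.isLt
      have hmin := hprop i.val j.val _ _ hlt h1 h2 hadj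
      have hji : (j - i).val = j.val - i.val := by
        rw [fin_sub_val, if_pos (le_of_lt hlt)]
      have hrel : j - i = (j - t) - (i - t) := (sub_sub_sub_cancel_right j i t).symm
      have ha := hi.2
      have hb := hj.2
      have hsub4 := fin_sub_val (j - t) (i - t)
      rw [← hrel, hji] at hsub4
      have hjn : j.val < n := j.isLt
      by_cases hab : (i - t).val ≤ (j - t).val
      · rw [if_pos hab] at hsub4; omega
      · rw [if_neg hab] at hsub4
        push_neg at hab
        omega
    have hmatch : ∀ e ∈ M, ∀ e' ∈ M, ¬ EdgesAdj e e' := by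
      intro e he e' he' hadj
      rw [hM, Finset.mem_image] at he he'
      obtain ⟨i, hi, rfl⟩ := he
      obtain ⟨j, hj, rfl⟩ := he'
      have hij : i ≠ j := by rintro rfl; exact hadj.1 rfl
      rcases lt_or_gt_of_ne (fun h : i.val = j.val => hij (Fin.val_injective h)) with h | h
      · exact key2 i j hi hj h hadj
      · exact key2 j i hj hi h ⟨Ne.symm hadj.1, hadj.2.imp fun x hx => ⟨hx.2, hx.1⟩⟩
    have hdiag : ∀ e ∈ M, ¬ e.IsDiag := by
      intro e he
      exact H.not_isDiag_of_mem_edgeSet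
        (w.edges_subset_edgeSet (List.mem_toFinset.mp (hC ▸ hMC e he)))
    have hle := matching_le T M (fun e he => hmemT e (hMC e he)) hdiag hmatch
    rw [hMcard, hTcard] at hle
    obtain ⟨r, hr⟩ := hodd
    omega
  -- double counting
  have hsum : ∑ t : Fin n, (P.filter (fun i => (i - t).val < s)).card = m * s := by
    calc ∑ t : Fin n, (P.filter (fun i => (i - t).val < s)).card
        = ∑ t : Fin n, ∑ i ∈ P, if (i - t).val < s then 1 else 0 :=
          Finset.sum_congr rfl fun t _ => Finset.card_filter _ _
      _ = ∑ i ∈ P, ∑ t : Fin n, if (i - t).val < s then 1 else 0 := Finset.sum_comm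
      _ = ∑ i ∈ P, (Finset.univ.filter (fun t : Fin n => (i - t).val < s)).card :=
          Finset.sum_congr rfl fun i _ => (Finset.card_filter _ _).symm
      _ = ∑ i ∈ P, s := by
          refine Finset.sum_congr rfl fun i _ => ?_
          have hb : (Finset.univ.filter (fun t : Fin n => (i - t).val < s)).card
              = (Finset.univ.filter (fun k : Fin n => k.val < s)).card := by
            apply Finset.card_bij (fun t _ => i - t)
            · intro t ht
              simp only [mem_filter, mem_univ, true_and] at ht ⊢
              exact ht
            · intro a _ b _ hab
              have h1 : i - (i - a) = a := sub_sub_cancel i a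
              have h2 : i - (i - b) = b := sub_sub_cancel i b
              rw [← h1, ← h2, hab]
            · intro k hk
              simp only [mem_filter, mem_univ, true_and] at hk
              refine ⟨i - k, ?_, sub_sub_cancel i k⟩
              simp only [mem_filter, mem_univ, true_and]
              rwa [show i - (i - k) = k from sub_sub_cancel i k]
          rw [hb, card_val_lt hsn]
      _ = m * s := by rw [Finset.sum_const, hPcard, smul_eq_mul]
  have hfinal := Finset.sum_le_sum (fun t (_ : t ∈ (Finset.univ : Finset (Fin n))) => hwin t)
  rw [← Finset.mul_sum, hsum, Finset.sum_const, smul_eq_mul, Finset.card_univ,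
    Fintype.card_fin] at hfinal
  calc 2 * (s * m) = 2 * (m * s) := by ring
    _ ≤ n * (m - 1) := hfinal
    _ = (m - 1) * L.length := by rw [mul_comm]

end Aux

/-- Corollary: let `H` be a 2-regular class 2 graph (for a 2-regular graph this means
chromatic index 3) whose shortest odd cycle has length `m`.  Then
`cms(H) ≤ (m-1)|E(H)|/(2m)`. -/
theorem cms_le_of_shortest_odd_cycle {V : Type*} [Fintype V] (H : SimpleGraph V) (m : ℕ)
    (hreg : IsRegularGraph H 2) (hclass2 : chromaticIndex H = 3)
    (hshort : ∃ (v : V) (w : H.Walk v v), w.IsCycle ∧ Odd w.length ∧ w.length = m)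
    (hmin : ∀ (v : V) (w : H.Walk v v), w.IsCycle → Odd w.length → m ≤ w.length) :
    (cms H : ℝ) ≤ ((m : ℝ) - 1) * (numEdges H : ℝ) / (2 * (m : ℝ)) := by
  classical
  obtain ⟨v, w, hcyc, hodd, hlen⟩ := hshort
  have hm3 : 3 ≤ m := hlen ▸ hcyc.three_le_length
  have hmodd : Odd m := hlen ▸ hodd
  have hmpos : (0 : ℝ) < 2 * (m : ℝ) := by positivity
  -- length of any ordering equals numEdges
  have hlenE : ∀ L : List (Sym2 V), IsOrdering H L → L.length = numEdges H := by
    intro L hL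
    have h1 : L.toFinset = H.edgeSet.toFinset := by
      ext e
      simp only [List.mem_toFinset, Set.mem_toFinset]
      exact hL.2 e
    rw [numEdges, Nat.card_coe_set_eq, Set.ncard_eq_toFinset_card', ← h1,
      List.toFinset_card_of_nodup hL.1]
  -- the key natural-number bound for any value in the cms set
  have hkey : ∀ k ∈ {k | ∃ L, IsOrdering H L ∧ cmsList L = k},
      2 * (k * m) ≤ (m - 1) * numEdges H := by
    rintro k ⟨L, hL, rfl⟩
    rw [cmsList]
    set S := {s | 1 ≤ s ∧ s ≤ L.length ∧ ∀ i j e e', i < j →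
      L[i]? = some e → L[j]? = some e' → EdgesAdj e e' →
      s ≤ min (j - i) (L.length - (j - i))} with hS
    rcases Set.eq_empty_or_nonempty S with hemp | hne
    · rw [hemp, csSup_empty]
      simp
    · have hbdd : BddAbove S := ⟨L.length, fun x hx => hx.2.1⟩
      have hmem := Nat.sSup_mem hne hbdd
      rw [hS] at hmem
      obtain ⟨hs1, hsn, hprop⟩ := hmem
      have h9 := key_count hL w hcyc hlen hmodd hs1 hsn hprop
      rw [show numEdges H = L.length from (hlenE L hL).symm]
      exact h9
  -- cms H itself satisfies the bound
  have hcms : 2 * (cms H * m) ≤ (m - 1) * numEdges H := by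
    rw [cms]
    rcases Set.eq_empty_or_nonempty {k | ∃ L, IsOrdering H L ∧ cmsList L = k} with hemp | hne
    · rw [hemp, csSup_empty]
      simp
    · have hbdd : BddAbove {k | ∃ L, IsOrdering H L ∧ cmsList L = k} := by
        refine ⟨(m - 1) * numEdges H, fun k hk => ?_⟩
        have h2 := hkey k hk
        have h3 : k * 1 ≤ k * m := Nat.mul_le_mul_left k (by omega)
        omega
      exact hkey _ (Nat.sSup_mem hne hbdd)
  -- convert to the real inequality
  rw [le_div_iff₀ hmpos]
  have hcast : ((m - 1 : ℕ) : ℝ) = (m : ℝ) - 1 := by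
    rw [Nat.cast_sub (by omega)]
    norm_num
  have := (Nat.cast_le (α := ℝ)).mpr hcms
  push_cast at this
  rw [hcast] at this
  nlinarith [this]
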